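/- Let x be a nonzero element of an algebraic closure of F_7 and let f(x) = 4x^{10} + x^7 + 2x^4 + 5x. Then x^{14}·f(x^{-2}) + x^{-14}·f(x^2) = 0 if and only if x^6 = -1. -/

import Mathlib

instance : Fact (Nat.Prime 7) := ⟨by norm_num⟩

theorem stmt_2 (x : AlgebraicClosure (ZMod 7)) (hx : x ≠ 0) :
    x ^ 14 * (4 * (x⁻¹ ^ 2) ^ 10 + (x⁻¹ ^ 2) ^ 7 + 2 * (x⁻¹ ^ 2) ^ 4 + 5 * (x⁻¹ ^ 2))
      + (x⁻¹) ^ 14 * (4 * (x ^ 2) ^ 10 + (x ^ 2) ^ 7 + 2 * (x ^ 2) ^ 4 + 5 * (x ^ 2)) = 0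
      ↔ x ^ 6 = -1 := by
  have h7 : (7 : AlgebraicClosure (ZMod 7)) = 0 := by
    exact_mod_cast CharP.cast_eq_zero (AlgebraicClosure (ZMod 7)) 7
  have h5 : (5 : AlgebraicClosure (ZMod 7)) ≠ 0 := by
    intro h
    have : (2 : AlgebraicClosure (ZMod 7)) = 0 := by linear_combination h7 - h
    have h1 : (1 : AlgebraicClosure (ZMod 7)) = 0 := by
      linear_combination h7 - 3 * this
    exact one_ne_zero h1
  have h0 : (x ^ 2) ^ 10 * (x ^ 2) ^ 7 * (x ^ 2) ^ 4 * x ^ 2 ≠ 0 := by simp [hx]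
  have key : x ^ 14 * (4 * (x⁻¹ ^ 2) ^ 10 + (x⁻¹ ^ 2) ^ 7 + 2 * (x⁻¹ ^ 2) ^ 4 + 5 * (x⁻¹ ^ 2))
      + (x⁻¹) ^ 14 * (4 * (x ^ 2) ^ 10 + (x ^ 2) ^ 7 + 2 * (x ^ 2) ^ 4 + 5 * (x ^ 2))
      = 5 * (x⁻¹) ^ 12 * (x ^ 6 + 1) ^ 4 := by
    field_simp
    linear_combination (-(2 * x ^ 6 + 4 * x ^ 12 + 2 * x ^ 18)) * h7
  rw [key]
  constructor
  · intro h
    rcases mul_eq_zero.mp h with h | h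
    · rcases mul_eq_zero.mp h with h | h
      · exact absurd h h5
      · exact absurd (inv_eq_zero.mp (pow_eq_zero_iff (by norm_num)|>.mp h)) hx
    · have := pow_eq_zero_iff (n := 4) (by norm_num) |>.mp h
      exact eq_neg_of_add_eq_zero_left this
  · intro h
    rw [h]
    ring
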